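/- For every odd integer n >= 7, the minimum size of an identifying code of the cycle C_n equals n/2 + 3/2, i.e., (n+3)/2. -/

import Mathlib

open SimpleGraph
open scoped Fin.NatCast Fin.CommRing

/-- The closed neighborhood of a vertex. -/
def cnbr {V : Type*} (G : SimpleGraph V) (v : V) : Set V := insert v (G.neighborSet v)

/-- `C` is an identifying code of `G`: every vertex is dominated by `C` and the
closed-neighborhood traces on `C` are pairwise distinct. -/
def IsIdCode {V : Type*} (G : SimpleGraph V) (C : Set V) : Prop :=
  (∀ v, (cnbr G v ∩ C).Nonempty) ∧
  ∀ u v : V, cnbr G u ∩ C = cnbr G v ∩ C → u = v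

/-- The minimum size of an identifying code of `G`. -/
noncomputable def gammaID {V : Type*} (G : SimpleGraph V) : ℕ :=
  sInf {n | ∃ C : Set V, IsIdCode G C ∧ C.ncard = n}

lemma litne (m k : ℕ) (h1 : 0 < k) (h2 : k < m+7) : ((k : Fin (m+7))) ≠ 0 := by
  intro h
  have := congrArg Fin.val h
  rw [Fin.val_natCast] at this
  simp [Nat.mod_eq_of_lt h2] at this
  omega

lemma tr_eq (m : ℕ) (C : Set (Fin (m+7))) (v : Fin (m+7)) :
    cnbr (cycleGraph (m+7)) v ∩ C = {y | (y = v - 1 ∨ y = v ∨ y = v + 1) ∧ y ∈ C} := by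
  unfold cnbr
  rw [cycleGraph_neighborSet (n := m+5)]
  ext y
  simp [Set.mem_insert_iff, and_comm]
  tauto

section
variable (m : ℕ) (C : Set (Fin (m+7)))

lemma key1 (hA : ∀ x : Fin (m+7), x ∈ C ∨ x + 3 ∈ C) (u : Fin (m+7))
    (h : cnbr (cycleGraph (m+7)) u ∩ C = cnbr (cycleGraph (m+7)) (u+1) ∩ C) : False := by
  rw [tr_eq, tr_eq] at h
  have hm := Set.ext_iff.mp h
  rcases hA (u - 1) with hc | hc
  · obtain ⟨hy, -⟩ := (hm (u-1)).mp ⟨Or.inl rfl, hc⟩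
    rcases hy with e|e|e
    · exact litne m 1 (by omega) (by omega) (by push_cast; linear_combination -e)
    · exact litne m 2 (by omega) (by omega) (by push_cast; linear_combination -e)
    · exact litne m 3 (by omega) (by omega) (by push_cast; linear_combination -e)
  · rw [show u - 1 + 3 = u + 2 by ring] at hc
    obtain ⟨hy, -⟩ := (hm (u+2)).mpr ⟨Or.inr (Or.inr (by ring)), hc⟩
    rcases hy with e|e|e
    · exact litne m 3 (by omega) (by omega) (by push_cast; linear_combination e)
    · exact litne m 2 (by omega) (by omega) (by push_cast; linear_combination e)
    · exact litne m 1 (by omega) (by omega) (by push_cast; linear_combination e)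

lemma key2 (hA : ∀ x : Fin (m+7), x ∈ C ∨ x + 3 ∈ C) (u : Fin (m+7))
    (h : cnbr (cycleGraph (m+7)) u ∩ C = cnbr (cycleGraph (m+7)) (u+2) ∩ C) : False := by
  rw [tr_eq, tr_eq] at h
  have hm := Set.ext_iff.mp h
  rcases hA (u - 1) with hc | hc
  · obtain ⟨hy, -⟩ := (hm (u-1)).mp ⟨Or.inl rfl, hc⟩
    rcases hy with e|e|e
    · exact litne m 2 (by omega) (by omega) (by push_cast; linear_combination -e)
    · exact litne m 3 (by omega) (by omega) (by push_cast; linear_combination -e)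
    · exact litne m 4 (by omega) (by omega) (by push_cast; linear_combination -e)
  · rw [show u - 1 + 3 = u + 2 by ring] at hc
    obtain ⟨hy, -⟩ := (hm (u+2)).mpr ⟨Or.inr (Or.inl rfl), hc⟩
    rcases hy with e|e|e
    · exact litne m 3 (by omega) (by omega) (by push_cast; linear_combination e)
    · exact litne m 2 (by omega) (by omega) (by push_cast; linear_combination e)
    · exact litne m 1 (by omega) (by omega) (by push_cast; linear_combination e)

lemma idcode_iff :
    IsIdCode (cycleGraph (m+7)) C ↔
      (∀ x : Fin (m+7), x ∈ C ∨ x + 3 ∈ C) ∧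
      (∀ x : Fin (m+7), x ∈ C ∨ x + 1 ∈ C ∨ x + 2 ∈ C) := by
  constructor
  · rintro ⟨hdom, hinj⟩
    constructor
    · intro x
      by_contra hcon
      push_neg at hcon
      obtain ⟨hx, hx3⟩ := hcon
      have heq : cnbr (cycleGraph (m+7)) (x+1) ∩ C = cnbr (cycleGraph (m+7)) (x+2) ∩ C := by
        rw [tr_eq, tr_eq]
        ext y
        simp only [Set.mem_setOf_eq]
        constructor
        · rintro ⟨hy, hyC⟩
          refine ⟨?_, hyC⟩
          rcases hy with e|e|e
          · exact absurd (e ▸ hyC) (by rwa [show x + 1 - 1 = x by ring])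
          · left; rw [e]; ring
          · right; left; rw [e]; ring
        · rintro ⟨hy, hyC⟩
          refine ⟨?_, hyC⟩
          rcases hy with e|e|e
          · right; left; rw [e]; ring
          · right; right; rw [e]; ring
          · exact absurd (e ▸ hyC) (by rwa [show x + 2 + 1 = x + 3 by ring])
      have := hinj _ _ heq
      exact litne m 1 (by omega) (by omega) (by push_cast; linear_combination -this)
    · intro x
      obtain ⟨c, hc⟩ := hdom (x + 1)
      rw [tr_eq] at hc
      obtain ⟨hy, hyC⟩ := hc
      rcases hy with e|e|e
      · rw [show x + 1 - 1 = x by ring] at e; exact Or.inl (e ▸ hyC)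
      · exact Or.inr (Or.inl (e ▸ hyC))
      · rw [show x + 1 + 1 = x + 2 by ring] at e; exact Or.inr (Or.inr (e ▸ hyC))
  · rintro ⟨hA, hB⟩
    constructor
    · intro v
      rcases hB (v - 1) with hc|hc|hc
      · exact ⟨v - 1, by rw [tr_eq]; exact ⟨Or.inl rfl, hc⟩⟩
      · exact ⟨v, by rw [tr_eq]; exact ⟨Or.inr (Or.inl rfl), by rwa [show v - 1 + 1 = v by ring] at hc⟩⟩
      · exact ⟨v + 1, by rw [tr_eq]; exact ⟨Or.inr (Or.inr rfl), by rwa [show v - 1 + 2 = v + 1 by ring] at hc⟩⟩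
    · intro u v h
      have hdomu : (cnbr (cycleGraph (m+7)) u ∩ C).Nonempty := by
        rcases hB (u - 1) with hc|hc|hc
        · exact ⟨u - 1, by rw [tr_eq]; exact ⟨Or.inl rfl, hc⟩⟩
        · exact ⟨u, by rw [tr_eq]; exact ⟨Or.inr (Or.inl rfl), by rwa [show u - 1 + 1 = u by ring] at hc⟩⟩
        · exact ⟨u + 1, by rw [tr_eq]; exact ⟨Or.inr (Or.inr rfl), by rwa [show u - 1 + 2 = u + 1 by ring] at hc⟩⟩
      obtain ⟨c, hcu⟩ := hdomu
      have hcv : c ∈ cnbr (cycleGraph (m+7)) v ∩ C := h ▸ hcu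
      rw [tr_eq] at hcu hcv
      obtain ⟨hy1, -⟩ := hcu
      obtain ⟨hy2, -⟩ := hcv
      -- v = u + d
      rcases hy1 with e1|e1|e1 <;> rcases hy2 with e2|e2|e2
      · -- c = u-1, c = v-1 : u = v
        linear_combination e2 - e1
      · -- c = u-1, c = v: v = u - 1, u = v+1
        rw [show u = v + 1 by linear_combination e2 - e1] at h
        exact absurd h.symm (fun hh => key1 m C hA v hh)
      · rw [show u = v + 2 by linear_combination e2 - e1] at h
        exact absurd h.symm (fun hh => key2 m C hA v hh)
      · rw [show v = u + 1 by linear_combination e1 - e2] at h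
        exact absurd h (fun hh => key1 m C hA u hh)
      · linear_combination e2 - e1
      · rw [show u = v + 1 by linear_combination e2 - e1] at h
        exact absurd h.symm (fun hh => key1 m C hA v hh)
      · rw [show v = u + 2 by linear_combination e1 - e2] at h
        exact absurd h (fun hh => key2 m C hA u hh)
      · rw [show v = u + 1 by linear_combination e1 - e2] at h
        exact absurd h (fun hh => key1 m C hA u hh)
      · linear_combination e2 - e1
end


lemma alt (b : ℕ → Prop) (K : ℕ) (hb : ∀ j < K, (b j ↔ ¬ b (j+1))) : (b K ↔ b 0) ↔ Even K := by
  induction K with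
  | zero => simp
  | succ k ih =>
    have hk := hb k (by omega)
    have ih' := ih (fun j hj => hb j (by omega))
    rw [Nat.even_add_one, ← ih']
    tauto

lemma castzero (m j : ℕ) (h : ((j : ℕ) : Fin (m+7)) = 0) : (m+7) ∣ j := by
  have := congrArg Fin.val h
  rw [Fin.val_natCast] at this
  simp at this
  exact Nat.dvd_of_mod_eq_zero this

lemma finCastEq (m a b k : ℕ) (h : a = b + k*(m+7)) :
    ((a : ℕ) : Fin (m+7)) = ((b : ℕ) : Fin (m+7)) := by
  apply Fin.ext
  rw [Fin.val_natCast, Fin.val_natCast, h, Nat.add_mul_mod_self_right]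

lemma Tcard_ne_one (m : ℕ) (hodd : Odd (m+7)) (C : Set (Fin (m+7)))
    (hA : ∀ x : Fin (m+7), x ∈ C ∨ x + 3 ∈ C)
    (hB : ∀ x : Fin (m+7), x ∈ C ∨ x + 1 ∈ C ∨ x + 2 ∈ C)
    (x₀ : Fin (m+7))
    (hTmem : ∀ x : Fin (m+7), (x ∈ C ∧ x + 3 ∈ C) ↔ x = x₀) : False := by
  have hxor : ∀ x : Fin (m+7), x ≠ x₀ → (x ∈ C ↔ x + 3 ∉ C) := by
    intro x hx
    constructor
    · intro hc hc3; exact hx ((hTmem x).mp ⟨hc, hc3⟩)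
    · intro hc3
      rcases hA x with h|h
      exacts [h, absurd h hc3]
  by_cases h3 : 3 ∣ (m+7)
  · -- walk on the coset of x₀ + 1
    set b : ℕ → Prop := fun j => x₀ + 1 + ((3*j : ℕ) : Fin (m+7)) ∈ C with hb_def
    have hb : ∀ j, (b j ↔ ¬ b (j+1)) := by
      intro j
      have hne : x₀ + 1 + ((3*j : ℕ) : Fin (m+7)) ≠ x₀ := by
        intro hE
        have h0 : ((1 + 3*j : ℕ) : Fin (m+7)) = 0 := by
          push_cast at hE ⊢
          linear_combination hE
        have hdvd := castzero m _ h0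
        obtain ⟨k, hk⟩ := h3.trans hdvd
        omega
      have h := hxor _ hne
      rw [show x₀ + 1 + ((3*j : ℕ) : Fin (m+7)) + 3 = x₀ + 1 + ((3*(j+1) : ℕ) : Fin (m+7)) by
        push_cast; ring] at h
      exact h
    have hbN : b (m+7) ↔ b 0 := by
      rw [hb_def]
      simp only
      rw [show ((3*(m+7) : ℕ) : Fin (m+7)) = ((3*0 : ℕ) : Fin (m+7)) from
        finCastEq m _ _ 3 (by ring)]
    have := (alt b (m+7) (fun j _ => hb j)).mp hbN
    exact (Nat.not_even_iff_odd.mpr hodd) this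
  · -- single cycle case
    set b : ℕ → Prop := fun j => x₀ + ((3*j : ℕ) : Fin (m+7)) ∈ C with hb_def
    have hb : ∀ j, 1 ≤ j → j ≤ m+6 → (b j ↔ ¬ b (j+1)) := by
      intro j h1 h2
      have hne : x₀ + ((3*j : ℕ) : Fin (m+7)) ≠ x₀ := by
        intro hE
        have h0 : ((3*j : ℕ) : Fin (m+7)) = 0 := by linear_combination hE
        have hdvd := castzero m _ h0
        have hdj : (m+7) ∣ j := by
          have hc : Nat.Coprime 3 (m+7) := (Nat.Prime.coprime_iff_not_dvd Nat.prime_three).mpr h3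
          exact Nat.Coprime.dvd_of_dvd_mul_left hc.symm hdvd
        have := Nat.le_of_dvd (by omega) hdj
        omega
      have h := hxor _ hne
      rw [show x₀ + ((3*j : ℕ) : Fin (m+7)) + 3 = x₀ + ((3*(j+1) : ℕ) : Fin (m+7)) by
        push_cast; ring] at h
      exact h
    have hb1 : b 1 := by
      have := ((hTmem x₀).mpr rfl).2
      rw [hb_def]
      simp only
      rw [show ((3*1 : ℕ) : Fin (m+7)) = (3 : Fin (m+7)) by push_cast; ring]
      exact this
    have hoddb : ∀ j, 1 ≤ j → j ≤ m+7 → (b j ↔ Odd j) := by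
      intro j hj
      induction j, hj using Nat.le_induction with
      | base => intro _; simpa using hb1
      | succ j hj ih =>
        intro hjn
        have hjodd := ih (by omega)
        have hstep := hb j (by omega) (by omega)
        rw [Nat.odd_add_one]
        tauto
    have hnotC : ∀ j, 2 ≤ j → j ≤ m+6 → Even j → x₀ + ((3*j : ℕ) : Fin (m+7)) ∉ C := by
      intro j h1 h2 he hc
      have := (hoddb j (by omega) (by omega)).mp hc
      exact (Nat.not_odd_iff_even.mpr he) this
    have hr : (m+7) % 6 = 1 ∨ (m+7) % 6 = 5 := by
      have h2 : (m+7) % 2 = 1 := Nat.odd_iff.mp hodd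
      have h3' : (m+7) % 3 ≠ 0 := fun h => h3 (Nat.dvd_of_mod_eq_zero h)
      omega
    set q := (m+7) / 6 with hq
    have hq6 : m + 7 = 6*q + (m+7) % 6 := by omega
    rcases hr with hr | hr
    · -- m+7 = 6q+1
      have hN : m + 7 = 6*q + 1 := by omega
      have hq1 : 1 ≤ q := by omega
      have h1 := hnotC (4*q+2) (by omega) (by omega) ⟨2*q+1, by ring⟩
      have h2 := hnotC (2*q+2) (by omega) (by omega) ⟨q+1, by ring⟩
      have h3' := hnotC 2 (by omega) (by omega) ⟨1, by ring⟩
      have e1 : ((3*(2*q+2) : ℕ) : Fin (m+7)) = ((3*(4*q+2) : ℕ) : Fin (m+7)) + 1 := by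
        have h := finCastEq m (3*(4*q+2)+1) (3*(2*q+2)) 1 (by omega)
        rw [← h]; push_cast; ring
      have e2 : ((3*2 : ℕ) : Fin (m+7)) = ((3*(4*q+2) : ℕ) : Fin (m+7)) + 2 := by
        have h := finCastEq m (3*(4*q+2)+2) (3*2) 2 (by omega)
        rw [← h]; push_cast; ring
      rcases hB (x₀ + ((3*(4*q+2) : ℕ) : Fin (m+7))) with hc|hc|hc
      · exact h1 hc
      · apply h2
        have : x₀ + ((3*(2*q+2) : ℕ) : Fin (m+7)) = x₀ + ((3*(4*q+2) : ℕ) : Fin (m+7)) + 1 := by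
          rw [e1, add_assoc]
        rwa [← this] at hc
      · apply h3'
        have : x₀ + ((3*2 : ℕ) : Fin (m+7)) = x₀ + ((3*(4*q+2) : ℕ) : Fin (m+7)) + 2 := by
          rw [e2, add_assoc]
        rwa [← this] at hc
    · -- m+7 = 6q+5
      have hN : m + 7 = 6*q + 5 := by omega
      have hq1 : 1 ≤ q := by omega
      have h1 := hnotC 2 (by omega) (by omega) ⟨1, by ring⟩
      have h2 := hnotC (2*q+4) (by omega) (by omega) ⟨q+2, by ring⟩
      have h3' := hnotC (4*q+6) (by omega) (by omega) ⟨2*q+3, by ring⟩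
      have e1 : ((3*(2*q+4) : ℕ) : Fin (m+7)) = ((3*2 : ℕ) : Fin (m+7)) + 1 := by
        have h := finCastEq m (3*(2*q+4)) (3*2+1) 1 (by omega)
        rw [h]; push_cast; ring
      have e2 : ((3*(4*q+6) : ℕ) : Fin (m+7)) = ((3*2 : ℕ) : Fin (m+7)) + 2 := by
        have h := finCastEq m (3*(4*q+6)) (3*2+2) 2 (by omega)
        rw [h]; push_cast; ring
      rcases hB (x₀ + ((3*2 : ℕ) : Fin (m+7))) with hc|hc|hc
      · exact h1 hc
      · apply h2
        have : x₀ + ((3*(2*q+4) : ℕ) : Fin (m+7)) = x₀ + ((3*2 : ℕ) : Fin (m+7)) + 1 := by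
          rw [e1, add_assoc]
        rwa [← this] at hc
      · apply h3'
        have : x₀ + ((3*(4*q+6) : ℕ) : Fin (m+7)) = x₀ + ((3*2 : ℕ) : Fin (m+7)) + 2 := by
          rw [e2, add_assoc]
        rwa [← this] at hc



lemma lowerb (m : ℕ) (hodd : Odd (m+7)) (C : Set (Fin (m+7)))
    (hA : ∀ x : Fin (m+7), x ∈ C ∨ x + 3 ∈ C)
    (hB : ∀ x : Fin (m+7), x ∈ C ∨ x + 1 ∈ C ∨ x + 2 ∈ C) :
    (m+7+3)/2 ≤ C.ncard := by
  classical
  set Cf := Finset.univ.filter (fun x : Fin (m+7) => x ∈ C) with hCf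
  set Sf := Finset.univ.filter (fun x : Fin (m+7) => x ∉ C) with hSf
  set Tf := Finset.univ.filter (fun x : Fin (m+7) => x ∈ C ∧ x + 3 ∈ C) with hTf
  have hsum1 : ∑ x : Fin (m+7), (if x ∈ C then 0 else 1) = Sf.card := by
    rw [hSf, Finset.card_filter]
    exact Finset.sum_congr rfl (fun x _ => by split_ifs <;> tauto)
  have hsum2 : ∑ x : Fin (m+7), (if x + 3 ∈ C then 0 else 1)
      = ∑ x : Fin (m+7), (if x ∈ C then 0 else 1) :=
    Fintype.sum_equiv (Equiv.addRight (3 : Fin (m+7))) _ _ (fun x => by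
      simp [Equiv.coe_addRight]; rfl)
  have hpoint : ∀ x : Fin (m+7), ((if x ∈ C then 0 else 1) + (if x + 3 ∈ C then 0 else 1) : ℕ)
      = (if (x ∈ C ∧ x + 3 ∈ C) then 0 else 1) := by
    intro x
    have := hA x
    split_ifs <;> simp_all
  have hsum4 : Tf.card + ∑ x : Fin (m+7), (if (x ∈ C ∧ x + 3 ∈ C) then 0 else 1) = m+7 := by
    rw [hTf, Finset.card_filter, ← Finset.sum_add_distrib]
    calc ∑ x : Fin (m+7), ((if (x ∈ C ∧ x + 3 ∈ C) then 1 else 0)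
          + (if (x ∈ C ∧ x + 3 ∈ C) then 0 else 1))
        = ∑ _x : Fin (m+7), 1 := Finset.sum_congr rfl (fun x _ => by split_ifs <;> rfl)
      _ = m+7 := by simp
  have h2ST : 2 * Sf.card + Tf.card = m+7 := by
    have h1 : ∑ x : Fin (m+7), ((if x ∈ C then 0 else 1) + (if x + 3 ∈ C then 0 else 1))
        = 2 * Sf.card := by
      rw [Finset.sum_add_distrib, hsum2, hsum1]; ring
    have h2 : ∑ x : Fin (m+7), ((if x ∈ C then 0 else 1) + (if x + 3 ∈ C then 0 else 1))
        = ∑ x : Fin (m+7), (if (x ∈ C ∧ x + 3 ∈ C) then 0 else 1) :=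
      Finset.sum_congr rfl (fun x _ => hpoint x)
    omega
  have hCS : Cf.card + Sf.card = m+7 := by
    rw [hCf, hSf, Finset.card_filter_add_card_filter_not]
    simp
  have hT1 : Tf.card ≠ 1 := by
    intro h1
    obtain ⟨x₀, hx0⟩ := Finset.card_eq_one.mp h1
    refine Tcard_ne_one m hodd C hA hB x₀ (fun x => ?_)
    constructor
    · intro hx
      have : x ∈ Tf := by rw [hTf]; simp [hx.1, hx.2]
      rw [hx0] at this
      simpa using this
    · rintro rfl
      have : x ∈ Tf := by rw [hx0]; exact Finset.mem_singleton_self x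
      rw [hTf] at this
      simpa using this
  have hnc : C.ncard = Cf.card := by
    rw [Set.ncard_eq_toFinset_card']
    congr 1
    ext x
    simp [hCf]
  obtain ⟨w, hw⟩ := hodd
  rw [hnc]
  omega


lemma modsmall (a n : ℕ) (h : a < 2*n) (h0 : 0 < n) :
    a % n = if a < n then a else a - n := by
  split_ifs with h1
  · exact Nat.mod_eq_of_lt h1
  · rw [Nat.mod_eq_sub_mod (by omega), Nat.mod_eq_of_lt (by omega)]

lemma valadd (m : ℕ) (x y : Fin (m+7)) :
    (x + y).val = if x.val + y.val < m+7 then x.val + y.val else x.val + y.val - (m+7) := by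
  have hx := x.isLt
  have hy := y.isLt
  rw [Fin.val_add, modsmall _ _ (by omega) (by omega)]

lemma val1 (m : ℕ) : (1 : Fin (m+7)).val = 1 := by
  rw [show ((1 : Fin (m+7))).val = 1 % (m+7) from rfl]
  exact Nat.mod_eq_of_lt (by omega)

lemma val2 (m : ℕ) : (2 : Fin (m+7)).val = 2 := by
  rw [show ((2 : Fin (m+7))).val = 2 % (m+7) from rfl]
  exact Nat.mod_eq_of_lt (by omega)

lemma val3 (m : ℕ) : (3 : Fin (m+7)).val = 3 := by
  rw [show ((3 : Fin (m+7))).val = 3 % (m+7) from rfl]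
  exact Nat.mod_eq_of_lt (by omega)

section
variable (m : ℕ)

def C0 (m : ℕ) : Set (Fin (m+7)) := {x | x.val % 2 = 1 ∨ x.val = 0 ∨ x.val = m+6}

lemma C0_A (hodd : Odd (m+7)) : ∀ x : Fin (m+7), x ∈ C0 m ∨ x + 3 ∈ C0 m := by
  obtain ⟨w, hw⟩ := hodd
  intro x
  have hx := x.isLt
  simp only [C0, Set.mem_setOf_eq, valadd, val3]
  split_ifs <;> omega

lemma C0_B (hodd : Odd (m+7)) : ∀ x : Fin (m+7), x ∈ C0 m ∨ x + 1 ∈ C0 m ∨ x + 2 ∈ C0 m := by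
  obtain ⟨w, hw⟩ := hodd
  intro x
  have hx := x.isLt
  simp only [C0, Set.mem_setOf_eq, valadd, val1, val2]
  split_ifs <;> omega

lemma C0_card (hodd : Odd (m+7)) : (C0 m).ncard = (m+7+3)/2 := by
  classical
  obtain ⟨w, hw⟩ := hodd
  rw [Set.ncard_eq_toFinset_card']
  have h0 : (C0 m).toFinset
      = Finset.univ.filter (fun x : Fin (m+7) => x.val % 2 = 1 ∨ x.val = 0 ∨ x.val = m+6) := by
    ext x; rw [Set.mem_toFinset]; simp [C0]
  rw [h0]
  have h1 : (Finset.univ.filter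
        (fun x : Fin (m+7) => x.val % 2 = 1 ∨ x.val = 0 ∨ x.val = m+6)).card
      = ((Finset.range (m+7)).filter (fun i => i % 2 = 1 ∨ i = 0 ∨ i = m+6)).card := by
    rw [Finset.card_filter, Finset.card_filter]
    exact Fin.sum_univ_eq_sum_range (fun i => if i % 2 = 1 ∨ i = 0 ∨ i = m+6 then 1 else 0) (m+7)
  rw [h1, Finset.filter_or]
  have h2 : (Finset.range (m+7)).filter (fun i => i = 0 ∨ i = m+6) = {0, m+6} := by
    ext i; simp; omega
  have h3 : (Finset.range (m+7)).filter (fun i => i % 2 = 1)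
      = (Finset.range ((m+7)/2)).image (fun i => 2*i+1) := by
    ext i
    simp only [Finset.mem_filter, Finset.mem_range, Finset.mem_image]
    constructor
    · rintro ⟨h1', h2'⟩; exact ⟨i/2, by omega, by omega⟩
    · rintro ⟨j, hj, rfl⟩; omega
  rw [Finset.card_union_of_disjoint, h2, h3,
    Finset.card_image_of_injective _ (fun a b h => by omega)]
  · rw [Finset.card_pair (by omega)]
    simp only [Finset.card_range]
    omega
  · rw [Finset.disjoint_left]
    intro a ha hb
    rw [h2] at hb
    simp at ha hb
    omega


theorem stmt_9 (n : ℕ) (hodd : Odd n) (hn : 7 ≤ n) :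
    gammaID (SimpleGraph.cycleGraph n) = (n + 3) / 2 := by
  obtain ⟨m, rfl⟩ : ∃ m, n = m + 7 := ⟨n - 7, by omega⟩
  have hmem : ((m+7+3)/2) ∈
      {k | ∃ C : Set (Fin (m+7)), IsIdCode (cycleGraph (m+7)) C ∧ C.ncard = k} :=
    ⟨C0 m, (idcode_iff m (C0 m)).mpr ⟨C0_A m hodd, C0_B m hodd⟩, C0_card m hodd⟩
  rw [gammaID]
  apply le_antisymm
  · exact Nat.sInf_le hmem
  · apply le_csInf ⟨_, hmem⟩
    rintro b ⟨C, hC, rfl⟩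
    obtain ⟨hA, hB⟩ := (idcode_iff m C).mp hC
    exact lowerb m hodd C hA hB
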